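/- Let N ≥ 1, n ≥ 1 and let f: {0,1}^n → {0,1} be almost balanced. Then P⁰ is a conditional probability distribution: for all allowed input strings (u,v) and all x,y ∈ {0,1}^n, P⁰(x,y|u,v) ≥ 0, and Σ_{x,y ∈ {0,1}^n} P⁰(x,y|u,v) = 1. -/

import Mathlib

open Finset

/-- `sin²(π/(4N))`. -/
noncomputable def s2 (N : ℕ) : ℝ := Real.sin (Real.pi / (4 * N)) ^ 2

/-- `cos²(π/(4N))`. -/
noncomputable def c2 (N : ℕ) : ℝ := Real.cos (Real.pi / (4 * N)) ^ 2

/-- The set `G_N` of allowed input pairs: `u ∈ U = {0,2,...,2N-2}`,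
`v ∈ V = {1,3,...,2N-1}`, and either `|u-v| = 1` or `(u,v) = (0,2N-1)`. -/
def Allowed (N u v : ℕ) : Prop :=
  Even u ∧ u < 2 * N ∧ Odd v ∧ v < 2 * N ∧
    (v = u + 1 ∨ u = v + 1 ∨ (u = 0 ∧ v = 2 * N - 1))

/-- The single quantum box `Q(x,y|u,v)`: on the input pair `(0,2N-1)` it equals
`sin²(π/(4N))/2` if `x = y` and `cos²(π/(4N))/2` otherwise; on the input pairs
with `|u-v| = 1` it equals `cos²(π/(4N))/2` if `x = y` and `sin²(π/(4N))/2`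
otherwise. -/
noncomputable def Qbox (N : ℕ) (x y : Bool) (u v : ℕ) : ℝ :=
  if u = 0 ∧ v = 2 * N - 1 then (if x = y then s2 N / 2 else c2 N / 2)
  else (if x = y then c2 N / 2 else s2 N / 2)

/-- The allowed input pairs `(u,v) ∈ G_N` with `|u-v| = 1`, as a finite set. -/
def adjPairs (N : ℕ) : Finset (ℕ × ℕ) :=
  (Finset.range (2 * N) ×ˢ Finset.range (2 * N)).filter
    fun p => Even p.1 ∧ Odd p.2 ∧ (p.2 = p.1 + 1 ∨ p.1 = p.2 + 1)

/-- The chained Bell value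
`I_N(R) = R(0,0|0,2N-1) + R(1,1|0,2N-1) + Σ_{(u,v)∈G_N, |u-v|=1} (R(0,1|u,v) + R(1,0|u,v))`. -/
noncomputable def IBell (N : ℕ) (R : Bool → Bool → ℕ → ℕ → ℝ) : ℝ :=
  R false false 0 (2 * N - 1) + R true true 0 (2 * N - 1) +
    ∑ p ∈ adjPairs N, (R false true p.1 p.2 + R true false p.1 p.2)

/-- The biased boxes: `Qbias N false = Q⁰` is biased towards `x = 0` and
`Qbias N true = Q¹` is biased towards `x = 1`, each by shifting probability
`sin²(π/(4N))/2` within every row. -/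
noncomputable def Qbias (N : ℕ) (σ : Bool) (x y : Bool) (u v : ℕ) : ℝ :=
  if x = σ then Qbox N x y u v + s2 N / 2 else Qbox N x y u v - s2 N / 2


/-- `π⁰(s)` for the prefix `s = x_1…x_k`: the fraction, among strings
`z ∈ {0,1}^n` having `x_1…x_k` as a prefix, of those with `f(z) = 0`. -/
noncomputable def piz {n : ℕ} (f : (Fin n → Bool) → Bool) (k : ℕ)
    (x : Fin n → Bool) : ℝ :=
  ((Finset.univ.filter fun z : Fin n → Bool =>
      (∀ j : Fin n, (j : ℕ) < k → z j = x j) ∧ f z = false).card : ℝ) / 2 ^ (n - k)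

/-- `Δ_i(x_1…x_{i-1}) = |π⁰(x_1…x_{i-1}0) - π⁰(x_1…x_{i-1}1)|` (the index `i`
is 0-based here, so the prefix consists of the coordinates `j < i`). -/
noncomputable def Del {n : ℕ} (f : (Fin n → Bool) → Bool) (i : Fin n)
    (x : Fin n → Bool) : ℝ :=
  |piz f ((i : ℕ) + 1) (Function.update x i false) -
    piz f ((i : ℕ) + 1) (Function.update x i true)|

/-- `f` is almost balanced: `|Pr_x[f(x)=0] - Pr_x[f(x)=1]| ≤ 1/3` over
uniformly random `x ∈ {0,1}^n`. -/
def AlmostBalanced {n : ℕ} (f : (Fin n → Bool) → Bool) : Prop :=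
  |((Finset.univ.filter fun x : Fin n → Bool => f x = false).card : ℝ) / 2 ^ n -
    ((Finset.univ.filter fun x : Fin n → Bool => f x = true).card : ℝ) / 2 ^ n| ≤ 1 / 3

open Classical in
/-- The pivotal index `i(x)`: the least `i` with `Δ_i(x_1…x_{i-1}) ≥ 2/(3n)`
(junk value if none exists). -/
noncomputable def pivot {n : ℕ} (hn : 0 < n) (f : (Fin n → Bool) → Bool)
    (x : Fin n → Bool) : Fin n :=
  if h : ∃ i : Fin n, Del f i x ≥ 2 / (3 * n) then
    Fin.find (fun i : Fin n => Del f i x ≥ 2 / (3 * n)) h else ⟨0, hn⟩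

/-- The bias direction `σ(x)`: `0` if `π⁰(x_1…x_{i(x)-1}0) > π⁰(x_1…x_{i(x)-1}1)`
and `1` otherwise. -/
noncomputable def sig {n : ℕ} (hn : 0 < n) (f : (Fin n → Bool) → Bool)
    (x : Fin n → Bool) : Bool :=
  if piz f ((pivot hn f x : ℕ) + 1) (Function.update x (pivot hn f x) false) >
      piz f ((pivot hn f x : ℕ) + 1) (Function.update x (pivot hn f x) true)
  then false else true


/-- An allowed input string: componentwise allowed input pairs `(u_j, v_j) ∈ G_N`. -/
def AllowedStr (N : ℕ) {n : ℕ} (u v : Fin n → ℕ) : Prop :=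
  ∀ j : Fin n, Allowed N (u j) (v j)

/-- The `n`-fold product quantum system
`P(x,y|u,v) = ∏_j Q(x_j,y_j|u_j,v_j)`. -/
noncomputable def Pprod (N : ℕ) {n : ℕ} (x y : Fin n → Bool) (u v : Fin n → ℕ) : ℝ :=
  ∏ j : Fin n, Qbox N (x j) (y j) (u j) (v j)

/-- The biased `n`-box systems: `Pbias N hn f false = P⁰` biases the pivotal
subsystem of `x` in direction `σ(x)`, and `Pbias N hn f true = P¹` biases it
in direction `1 - σ(x)`; all the non-pivotal subsystems are the unbiased `Q`. -/
noncomputable def Pbias (N : ℕ) {n : ℕ} (hn : 0 < n) (f : (Fin n → Bool) → Bool)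
    (flip : Bool) (x y : Fin n → Bool) (u v : Fin n → ℕ) : ℝ :=
  Qbias N (xor (sig hn f x) flip) (x (pivot hn f x)) (y (pivot hn f x))
      (u (pivot hn f x)) (v (pivot hn f x)) *
    ∏ j ∈ Finset.univ.erase (pivot hn f x), Qbox N (x j) (y j) (u j) (v j)


lemma s2_nonneg (N : ℕ) : 0 ≤ s2 N := sq_nonneg _

lemma c2_nonneg (N : ℕ) : 0 ≤ c2 N := sq_nonneg _

lemma s2_add_c2 (N : ℕ) : s2 N + c2 N = 1 := Real.sin_sq_add_cos_sq _

lemma s2_le_c2 {N : ℕ} (hN : 1 ≤ N) : s2 N ≤ c2 N := by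
  have h1 : (1:ℝ) ≤ N := by exact_mod_cast hN
  have heq : 2 * (Real.pi / (4 * (N:ℝ))) = Real.pi / (2 * N) := by
    field_simp; ring
  have hcos : 0 ≤ Real.cos (2 * (Real.pi / (4 * (N:ℝ)))) := by
    rw [heq]
    apply Real.cos_nonneg_of_mem_Icc
    have h0 : 0 ≤ Real.pi / (2 * (N:ℝ)) := by positivity
    have hp := Real.pi_pos
    have hub : Real.pi / (2 * (N:ℝ)) ≤ Real.pi / 2 := by gcongr; linarith
    exact ⟨by linarith, hub⟩
  have h2 := Real.cos_two_mul (Real.pi / (4 * (N:ℝ)))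
  have h3 := s2_add_c2 N
  unfold s2 c2 at h3 ⊢
  unfold c2 at h2
  nlinarith [hcos, h2]

lemma Qbox_nonneg (N : ℕ) (x y : Bool) (u v : ℕ) : 0 ≤ Qbox N x y u v := by
  have := s2_nonneg N; have := c2_nonneg N
  unfold Qbox; split <;> split <;> linarith

lemma Qbox_row (N : ℕ) (x : Bool) (u v : ℕ) :
    Qbox N x false u v + Qbox N x true u v = 1 / 2 := by
  have := s2_add_c2 N
  unfold Qbox; split <;> cases x <;> simp <;> linarith

lemma Qbias_nonneg {N : ℕ} (hN : 1 ≤ N) (σ x y : Bool) (u v : ℕ) :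
    0 ≤ Qbias N σ x y u v := by
  have h1 := s2_nonneg N; have h2 := c2_nonneg N; have h3 := s2_le_c2 hN
  unfold Qbias Qbox; split <;> split <;> split <;> linarith

lemma Qbias_row (N : ℕ) (σ x : Bool) (u v : ℕ) :
    Qbias N σ x false u v + Qbias N σ x true u v
      = 1 / 2 + (if x = σ then s2 N else - s2 N) := by
  have h := Qbox_row N x u v
  by_cases hx : x = σ
  · subst hx; simp [Qbias]; linarith
  · simp [Qbias, hx]; linarith

lemma piz_congr {n : ℕ} (f : (Fin n → Bool) → Bool) (k : ℕ) {x x' : Fin n → Bool}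
    (h : ∀ j : Fin n, (j : ℕ) < k → x j = x' j) : piz f k x = piz f k x' := by
  unfold piz
  have hst : (Finset.univ.filter fun z : Fin n → Bool =>
      (∀ j : Fin n, (j : ℕ) < k → z j = x j) ∧ f z = false)
      = (Finset.univ.filter fun z : Fin n → Bool =>
      (∀ j : Fin n, (j : ℕ) < k → z j = x' j) ∧ f z = false) := by
    apply Finset.filter_congr
    intro z _
    constructor
    · rintro ⟨hz, hfz⟩
      exact ⟨fun j hj => (hz j hj).trans (h j hj), hfz⟩
    · rintro ⟨hz, hfz⟩
      exact ⟨fun j hj => (hz j hj).trans (h j hj).symm, hfz⟩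
  rw [hst]

lemma piz_avg {n : ℕ} (f : (Fin n → Bool) → Bool) {k : ℕ} (hk : k < n)
    (x : Fin n → Bool) :
    piz f k x = (piz f (k+1) (Function.update x ⟨k, hk⟩ false)
      + piz f (k+1) (Function.update x ⟨k, hk⟩ true)) / 2 := by
  classical
  set S := Finset.univ.filter fun z : Fin n → Bool =>
      (∀ j : Fin n, (j : ℕ) < k → z j = x j) ∧ f z = false with hS
  have hA : ∀ b : Bool,
      (Finset.univ.filter fun z : Fin n → Bool =>
        (∀ j : Fin n, (j : ℕ) < k + 1 → z j = Function.update x ⟨k, hk⟩ b j) ∧ f z = false)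
        = S.filter fun z => z ⟨k, hk⟩ = b := by
    intro b
    ext z
    simp only [hS, mem_filter, mem_univ, true_and]
    constructor
    · rintro ⟨hz, hfz⟩
      refine ⟨⟨fun j hj => ?_, hfz⟩, ?_⟩
      · have hne : j ≠ ⟨k, hk⟩ := by
          intro hc; rw [hc] at hj; exact absurd hj (lt_irrefl k)
        have := hz j (Nat.lt_succ_of_lt hj)
        rwa [Function.update_of_ne hne] at this
      · have := hz ⟨k, hk⟩ (Nat.lt_succ_self k)
        rwa [Function.update_self] at this
    · rintro ⟨⟨hz, hfz⟩, hzk⟩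
      refine ⟨fun j hj => ?_, hfz⟩
      rcases eq_or_ne j ⟨k, hk⟩ with rfl | hne
      · rw [Function.update_self]; exact hzk
      · rw [Function.update_of_ne hne]
        refine hz j ?_
        have : (j : ℕ) ≠ k := fun hc => hne (Fin.ext hc)
        omega
  have hcard : (S.card : ℝ)
      = ((S.filter fun z => z ⟨k, hk⟩ = false).card : ℝ)
        + ((S.filter fun z => z ⟨k, hk⟩ = true).card : ℝ) := by
    have := Finset.card_filter_add_card_filter_not
      (s := S) (p := fun z => z ⟨k, hk⟩ = false)
    have heq : (S.filter fun z => ¬ z ⟨k, hk⟩ = false)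
        = S.filter fun z => z ⟨k, hk⟩ = true := by
      apply Finset.filter_congr; intro z _; simp
    rw [heq] at this
    exact_mod_cast this.symm
  unfold piz
  rw [hA false, hA true, ← hS]
  have hnk : n - k = (n - (k+1)) + 1 := by omega
  rw [hnk, pow_succ, hcard]
  have hpow : (0:ℝ) < 2 ^ (n - (k+1)) := by positivity
  field_simp

lemma piz_full {n : ℕ} (f : (Fin n → Bool) → Bool) (x : Fin n → Bool) :
    piz f n x = if f x = false then 1 else 0 := by
  classical
  have hset : (Finset.univ.filter fun z : Fin n → Bool =>
      (∀ j : Fin n, (j : ℕ) < n → z j = x j) ∧ f z = false)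
      = if f x = false then {x} else ∅ := by
    split <;> rename_i h <;> ext z <;>
      simp only [mem_filter, mem_univ, true_and, mem_singleton, notMem_empty,
        iff_false]
    · constructor
      · rintro ⟨hz, _⟩; funext j; exact hz j j.isLt
      · rintro rfl; exact ⟨fun j _ => rfl, h⟩
    · rintro ⟨hz, hfz⟩
      have : z = x := funext fun j => hz j j.isLt
      rw [this] at hfz; exact h hfz
  unfold piz
  rw [hset]
  split <;> simp

lemma piz_zero_bound {n : ℕ} {f : (Fin n → Bool) → Bool} (hf : AlmostBalanced f)
    (x : Fin n → Bool) : |piz f 0 x - 1/2| ≤ 1/6 := by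
  classical
  have hset : (Finset.univ.filter fun z : Fin n → Bool =>
      (∀ j : Fin n, (j : ℕ) < 0 → z j = x j) ∧ f z = false)
      = Finset.univ.filter fun z : Fin n → Bool => f z = false := by
    apply Finset.filter_congr; intro z _; simp
  have h0 : piz f 0 x
      = ((Finset.univ.filter fun z : Fin n → Bool => f z = false).card : ℝ) / 2 ^ n := by
    unfold piz; rw [hset]; norm_num
  have hcard : ((Finset.univ.filter fun z : Fin n → Bool => f z = false).card : ℝ)
      + ((Finset.univ.filter fun z : Fin n → Bool => f z = true).card : ℝ) = 2 ^ n := by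
    have := Finset.card_filter_add_card_filter_not
      (s := (Finset.univ : Finset (Fin n → Bool))) (p := fun z => f z = false)
    have heq : ((Finset.univ : Finset (Fin n → Bool)).filter fun z => ¬ f z = false)
        = Finset.univ.filter fun z => f z = true := by
      apply Finset.filter_congr; intro z _; simp
    rw [heq] at this
    have hcu : (Finset.univ : Finset (Fin n → Bool)).card = 2 ^ n := by
      simp [Finset.card_univ]
    rw [hcu] at this
    exact_mod_cast this
  unfold AlmostBalanced at hf
  have hpow : (0:ℝ) < 2 ^ n := by positivity
  set a := ((Finset.univ.filter fun z : Fin n → Bool => f z = false).card : ℝ)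
  set b := ((Finset.univ.filter fun z : Fin n → Bool => f z = true).card : ℝ)
  rw [h0]
  rw [abs_le] at hf ⊢
  have hb : b = 2 ^ n - a := by linarith
  rw [hb] at hf
  have hb' : ((2:ℝ) ^ n - a) / 2 ^ n = 1 - a / 2 ^ n := by field_simp
  rw [hb'] at hf
  constructor <;> linarith [hf.1, hf.2]

lemma pivot_exists {n : ℕ} (hn : 0 < n) (f : (Fin n → Bool) → Bool)
    (hf : AlmostBalanced f) (x : Fin n → Bool) :
    ∃ i : Fin n, Del f i x ≥ 2 / (3 * (n : ℝ)) := by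
  by_contra hcon
  push_neg at hcon
  have hnR : (0:ℝ) < n := by exact_mod_cast hn
  have hstep : ∀ k : ℕ, k < n →
      |piz f (k+1) x - piz f k x| < 1 / (3 * (n : ℝ)) := by
    intro k hk
    have havg := piz_avg f hk x
    have hDel := hcon ⟨k, hk⟩
    unfold Del at hDel
    have hupd : Function.update x ⟨k, hk⟩ (x ⟨k, hk⟩) = x :=
      Function.update_eq_self _ _
    set Cf := piz f (k+1) (Function.update x ⟨k, hk⟩ false) with hCf
    set Ct := piz f (k+1) (Function.update x ⟨k, hk⟩ true) with hCt
    have hCfCt : |Cf - Ct| < 2 / (3 * (n : ℝ)) := by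
      simpa using hDel
    have habs : |piz f (k+1) x - piz f k x| = |Cf - Ct| / 2 := by
      cases hxk : x ⟨k, hk⟩ with
      | false =>
          have hx1 : piz f (k+1) x = Cf := by rw [hCf, ← hupd, hxk, Function.update_idem]
          rw [hx1, havg]
          have h2 : Cf - (Cf + Ct)/2 = (Cf - Ct)/2 := by ring
          rw [h2, abs_div, abs_two]
      | true =>
          have hx1 : piz f (k+1) x = Ct := by rw [hCt, ← hupd, hxk, Function.update_idem]
          rw [hx1, havg]
          have h2 : Ct - (Cf + Ct)/2 = -((Cf - Ct)/2) := by ring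
          rw [h2, abs_neg, abs_div, abs_two]
    rw [habs]
    have h1n : 2 / (3 * (n:ℝ)) / 2 = 1 / (3 * (n:ℝ)) := by ring
    linarith
  have htel : piz f n x - piz f 0 x
      = ∑ k ∈ Finset.range n, (piz f (k+1) x - piz f k x) :=
    (Finset.sum_range_sub (fun k => piz f k x) n).symm
  have h1 : |piz f n x - piz f 0 x|
      ≤ ∑ k ∈ Finset.range n, |piz f (k+1) x - piz f k x| := by
    rw [htel]; exact Finset.abs_sum_le_sum_abs _ _
  have h2 : ∑ k ∈ Finset.range n, |piz f (k+1) x - piz f k x|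
      < ∑ _k ∈ Finset.range n, 1 / (3 * (n : ℝ)) := by
    apply Finset.sum_lt_sum_of_nonempty
    · exact Finset.nonempty_range_iff.2 hn.ne'
    · intro k hk
      exact hstep k (Finset.mem_range.1 hk)
  have h3 : ∑ _k ∈ Finset.range n, 1 / (3 * (n : ℝ)) = 1 / 3 := by
    rw [Finset.sum_const, Finset.card_range, nsmul_eq_mul]
    field_simp
  have h4 : |piz f n x - piz f 0 x| < 1 / 3 := by
    rw [h3] at h2; linarith
  have h5 := piz_zero_bound hf x
  have h6 := piz_full f x
  rw [abs_lt] at h4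
  rw [abs_le] at h5
  by_cases hfx : f x = false
  · rw [h6, if_pos hfx] at h4; obtain ⟨h4a, h4b⟩ := h4; linarith [h5.1, h5.2]
  · rw [h6, if_neg hfx] at h4; obtain ⟨h4a, h4b⟩ := h4; linarith [h5.1, h5.2]

open Classical in

open Classical in
lemma pivot_find {n : ℕ} (hn : 0 < n) (f : (Fin n → Bool) → Bool)
    (hf : AlmostBalanced f) (x : Fin n → Bool) :
    Fin.find (fun i : Fin n => Del f i x ≥ 2 / (3 * (n : ℝ))) (pivot_exists hn f hf x)
      = pivot hn f x := by
  unfold pivot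
  rw [dif_pos (pivot_exists hn f hf x)]

lemma Del_congr {n : ℕ} (f : (Fin n → Bool) → Bool) (i : Fin n)
    {x x' : Fin n → Bool} (h : ∀ j : Fin n, (j : ℕ) < (i : ℕ) → x j = x' j) :
    Del f i x = Del f i x' := by
  unfold Del
  have hb : ∀ b : Bool, piz f ((i:ℕ)+1) (Function.update x i b)
      = piz f ((i:ℕ)+1) (Function.update x' i b) := by
    intro b
    apply piz_congr
    intro j hj
    rcases eq_or_ne j i with rfl | hne
    · rw [Function.update_self, Function.update_self]
    · rw [Function.update_of_ne hne, Function.update_of_ne hne]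
      apply h
      have hji : (j:ℕ) ≠ (i:ℕ) := fun hc => hne (Fin.ext hc)
      omega
  rw [hb false, hb true]

lemma pivot_update {n : ℕ} (hn : 0 < n) (f : (Fin n → Bool) → Bool)
    (hf : AlmostBalanced f) (x : Fin n → Bool) (b : Bool) :
    pivot hn f (Function.update x (pivot hn f x) b) = pivot hn f x := by
  classical
  set i0 := pivot hn f x with hi0
  obtain ⟨hp, hmin⟩ := (Fin.find_eq_iff _).1 (pivot_find hn f hf x)
  set x' := Function.update x i0 b with hx'
  have hagree : ∀ i : Fin n, (i:ℕ) ≤ (i0:ℕ) → Del f i x' = Del f i x := by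
    intro i hi
    apply Del_congr
    intro j hj
    rw [hx', Function.update_of_ne]
    intro hc
    rw [hc] at hj
    have : (i0:ℕ) < (i:ℕ) := hj
    omega
  have hfind' : Fin.find (fun i : Fin n => Del f i x' ≥ 2 / (3 * (n:ℝ)))
      (pivot_exists hn f hf x') = i0 := by
    rw [Fin.find_eq_iff]
    constructor
    · rw [hagree i0 le_rfl]; exact hp
    · intro j hlt hj
      have hjle : (j:ℕ) ≤ (i0:ℕ) := le_of_lt hlt
      rw [hagree j hjle] at hj
      exact hmin j hlt hj
  have hres := pivot_find hn f hf x'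
  rw [hfind'] at hres
  exact hres.symm

lemma sig_update {n : ℕ} (hn : 0 < n) (f : (Fin n → Bool) → Bool)
    (hf : AlmostBalanced f) (x : Fin n → Bool) (b : Bool) :
    sig hn f (Function.update x (pivot hn f x) b) = sig hn f x := by
  unfold sig
  rw [pivot_update hn f hf x b, Function.update_idem, Function.update_idem]


lemma Pbias_sum_y (N : ℕ) {n : ℕ} (hn : 0 < n) (f : (Fin n → Bool) → Bool)
    (x : Fin n → Bool) (u v : Fin n → ℕ) :
    ∑ y : Fin n → Bool, Pbias N hn f false x y u v
      = ((1:ℝ)/2)^(n-1) *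
        (1/2 + (if x (pivot hn f x) = sig hn f x then s2 N else - s2 N)) := by
  classical
  set i0 := pivot hn f x with hi0
  set σ := sig hn f x with hσ
  set g : Fin n → Bool → ℝ := fun j b =>
    if j = i0 then Qbias N σ (x i0) b (u i0) (v i0)
    else Qbox N (x j) b (u j) (v j) with hg
  have hP : ∀ y : Fin n → Bool, Pbias N hn f false x y u v = ∏ j, g j (y j) := by
    intro y
    rw [← Finset.mul_prod_erase Finset.univ (fun j => g j (y j)) (Finset.mem_univ i0)]
    unfold Pbias
    rw [← hi0, ← hσ]
    congr 1
    · simp [hg, Bool.xor_false]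
    · apply Finset.prod_congr rfl
      intro j hj
      have hne := Finset.ne_of_mem_erase hj
      simp [hg, hne]
  rw [Finset.sum_congr rfl (fun y _ => hP y)]
  rw [show (Finset.univ : Finset (Fin n → Bool))
      = Fintype.piFinset (fun _ : Fin n => (Finset.univ : Finset Bool)) from
      (Fintype.piFinset_univ).symm]
  rw [← Finset.prod_univ_sum (fun _ : Fin n => (Finset.univ : Finset Bool)) g]
  rw [← Finset.mul_prod_erase Finset.univ (fun j => ∑ b ∈ Finset.univ, g j b)
      (Finset.mem_univ i0)]
  have h1 : ∑ b ∈ (Finset.univ : Finset Bool), g i0 b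
      = 1/2 + (if x i0 = σ then s2 N else - s2 N) := by
    rw [show (∑ b ∈ (Finset.univ : Finset Bool), g i0 b)
        = g i0 true + g i0 false from Fintype.sum_bool _]
    simp only [hg, if_pos rfl]
    rw [add_comm]
    exact Qbias_row N σ (x i0) (u i0) (v i0)
  have h2 : ∏ j ∈ Finset.univ.erase i0, (∑ b ∈ (Finset.univ : Finset Bool), g j b)
      = ((1:ℝ)/2)^(n-1) := by
    have hrow : ∀ j ∈ Finset.univ.erase i0,
        (∑ b ∈ (Finset.univ : Finset Bool), g j b) = (1:ℝ)/2 := by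
      intro j hj
      have hne := Finset.ne_of_mem_erase hj
      rw [show (∑ b ∈ (Finset.univ : Finset Bool), g j b)
          = g j true + g j false from Fintype.sum_bool _]
      simp only [hg, if_neg hne]
      rw [add_comm]
      exact Qbox_row N (x j) (u j) (v j)
    rw [Finset.prod_congr rfl hrow, Finset.prod_const]
    congr 1
    rw [Finset.card_erase_of_mem (Finset.mem_univ _), Finset.card_univ,
      Fintype.card_fin]
  rw [h1, h2]
  ring

/-- For `N ≥ 1`, `n ≥ 1` and an almost balanced `f`, the biased system `P⁰`
is a conditional probability distribution: it is nonnegative and sums to `1`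
over all outputs, for every allowed input string. -/
theorem biased_system_is_distribution (N n : ℕ) (hN : 1 ≤ N) (hn : 0 < n)
    (f : (Fin n → Bool) → Bool) (hf : AlmostBalanced f) (u v : Fin n → ℕ)
    (huv : AllowedStr N u v) :
    (∀ x y : Fin n → Bool, 0 ≤ Pbias N hn f false x y u v) ∧
    (∑ x : Fin n → Bool, ∑ y : Fin n → Bool, Pbias N hn f false x y u v = 1) := by
  classical
  constructor
  · intro x y
    unfold Pbias
    exact mul_nonneg (Qbias_nonneg hN _ _ _ _ _)
      (Finset.prod_nonneg fun j _ => Qbox_nonneg _ _ _ _ _)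
  · rw [Finset.sum_congr rfl (fun x _ => Pbias_sum_y N hn f x u v)]
    have hsplit : ∀ x : Fin n → Bool,
        ((1:ℝ)/2)^(n-1) *
          (1/2 + (if x (pivot hn f x) = sig hn f x then s2 N else - s2 N))
        = ((1:ℝ)/2)^(n-1) * (1/2)
          + ((1:ℝ)/2)^(n-1) *
            (if x (pivot hn f x) = sig hn f x then s2 N else - s2 N) := by
      intro x; ring
    rw [Finset.sum_congr rfl (fun x _ => hsplit x), Finset.sum_add_distrib]
    have hzero : ∑ x : Fin n → Bool,
        ((1:ℝ)/2)^(n-1) *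
          (if x (pivot hn f x) = sig hn f x then s2 N else - s2 N) = 0 := by
      apply Finset.sum_involution
        (fun a _ => Function.update a (pivot hn f a) (!(a (pivot hn f a))))
      · intro a _
        have hp := pivot_update hn f hf a (!(a (pivot hn f a)))
        have hs := sig_update hn f hf a (!(a (pivot hn f a)))
        rw [hp, hs, Function.update_self]
        cases ha : a (pivot hn f a) <;> cases hsig : sig hn f a <;>
          simp [ha, hsig] <;> ring
      · intro a _ _ hc
        have hcc := congrFun hc (pivot hn f a)
        rw [Function.update_self] at hcc
        simp at hcc
      · intro a _; exact Finset.mem_univ _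
      · intro a _
        have hp := pivot_update hn f hf a (!(a (pivot hn f a)))
        rw [hp, Function.update_self, Bool.not_not, Function.update_idem,
          Function.update_eq_self]
    rw [hzero, add_zero, Finset.sum_const, Finset.card_univ]
    have hcard : Fintype.card (Fin n → Bool) = 2 ^ n := by
      simp
    rw [hcard, nsmul_eq_mul]
    have hpow : ((1:ℝ)/2)^(n-1) * (1/2) = ((1:ℝ)/2)^n := by
      rw [← pow_succ]
      congr 1
      omega
    rw [hpow]
    rw [Nat.cast_pow, Nat.cast_ofNat, one_div, inv_pow]
    field_simp
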